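/- Suppose n is even. Let M be a matching of maximum weight among all matchings of size n/3 in G, and let N be a matching of maximum weight among all matchings of size n/2 in G. Then w(N) ≥ w(M) − w(M'''_1) − w(M_2) + w(X_1) + Σ_{xyz ∈ P*_2} max{w(xy), w(yz)} + w(X_3) + w(X_4). -/

import Mathlib

open Finset
open scoped Classical

namespace MW3PP

/-- A 3-path `xyz`: a path on three distinct vertices with middle vertex `y`. -/
structure P3 (V : Type*) where
  x : V
  y : V
  z : V
  hxy : x ≠ y
  hyz : y ≠ z
  hxz : x ≠ z

variable {V : Type*} [Fintype V] [DecidableEq V]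

/-- The vertex set of a 3-path. -/
def P3.verts (p : P3 V) : Finset V := {p.x, p.y, p.z}

/-- The two edges of a 3-path. -/
def P3.edges (p : P3 V) : Finset (Sym2 V) := {s(p.x, p.y), s(p.y, p.z)}

/-- The weight of a 3-path. -/
def P3.wt (w : Sym2 V → ℝ) (p : P3 V) : ℝ := w s(p.x, p.y) + w s(p.y, p.z)

/-- The total weight of a set of edges. -/
def ew (w : Sym2 V → ℝ) (F : Finset (Sym2 V)) : ℝ := ∑ e ∈ F, w e

/-- The total weight of a set of 3-paths. -/
def pw (w : Sym2 V → ℝ) (P : Finset (P3 V)) : ℝ := ∑ p ∈ P, p.wt w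

/-- `∑_{xyz ∈ S} max (w (xy)) (w (yz))`. -/
def maxSum (w : Sym2 V → ℝ) (S : Finset (P3 V)) : ℝ :=
  ∑ p ∈ S, max (w s(p.x, p.y)) (w s(p.y, p.z))

/-- A perfect 3-path packing: `n/3` pairwise vertex-disjoint 3-paths covering all vertices. -/
def IsPacking (P : Finset (P3 V)) : Prop :=
  P.card = Fintype.card V / 3 ∧
  (∀ p ∈ P, ∀ q ∈ P, p ≠ q → Disjoint p.verts q.verts) ∧
  (∀ v : V, ∃ p ∈ P, v ∈ p.verts)

/-- A maximum-weight perfect 3-path packing. -/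
def IsMaxPacking (w : Sym2 V → ℝ) (P : Finset (P3 V)) : Prop :=
  IsPacking P ∧ ∀ Q : Finset (P3 V), IsPacking Q → pw w Q ≤ pw w P

/-- A matching: a set of pairwise vertex-disjoint (non-loop) edges. -/
def IsMatching (M : Finset (Sym2 V)) : Prop :=
  (∀ e ∈ M, ¬ e.IsDiag) ∧
  ∀ e ∈ M, ∀ f ∈ M, e ≠ f → ∀ v : V, v ∈ e → v ∉ f

/-- A maximum-weight matching among all matchings of size `k`. -/
def IsMaxMatchingOfSize (w : Sym2 V → ℝ) (k : ℕ) (M : Finset (Sym2 V)) : Prop :=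
  IsMatching M ∧ M.card = k ∧
  ∀ M' : Finset (Sym2 V), IsMatching M' → M'.card = k → ew w M' ≤ ew w M

/-- `v ∈ V(M)` : vertex `v` is covered by the matching `M`. -/
def covered (M : Finset (Sym2 V)) (v : V) : Prop := ∃ e ∈ M, v ∈ e

/-- `e_u` : the edge of `M` containing `u` (junk value if there is none). -/
noncomputable def eMatch (M : Finset (Sym2 V)) (u : V) : Sym2 V :=
  if h : ∃ e ∈ M, u ∈ e then h.choose else s(u, u)

/-- The cost `c` of an edge with respect to a matching `M`:
`c(uv) = w(uv) - min (w (e_u)) (w (e_v))` if both endpoints are covered by `M`,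
and `c(uv) = w(uv)` otherwise. -/
noncomputable def cost (w : Sym2 V → ℝ) (M : Finset (Sym2 V)) : Sym2 V → ℝ :=
  Sym2.lift ⟨fun u v =>
    if covered M u ∧ covered M v then
      w s(u, v) - min (w (eMatch M u)) (w (eMatch M v))
    else w s(u, v), by
      intro u v
      dsimp only
      by_cases h : covered M u ∧ covered M v
      · rw [if_pos h, if_pos (show covered M v ∧ covered M u from ⟨h.2, h.1⟩),
          Sym2.eq_swap, min_comm]
      · rw [if_neg h, if_neg (show ¬(covered M v ∧ covered M u) from fun h' => h ⟨h'.2, h'.1⟩),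
          Sym2.eq_swap]⟩

/-- The total cost of a set of edges. -/
noncomputable def cw (w : Sym2 V → ℝ) (M F : Finset (Sym2 V)) : ℝ := ∑ e ∈ F, cost w M e

/-- The number of vertices of the 3-path `p` covered by `M`. -/
noncomputable def kcnt (M : Finset (Sym2 V)) (p : P3 V) : ℕ :=
  (p.verts.filter fun v => covered M v).card

/-- Exactly one of the two edges of `p` lies in `M`. -/
def exOne (M : Finset (Sym2 V)) (p : P3 V) : Prop :=
  (s(p.x, p.y) ∈ M ∧ s(p.y, p.z) ∉ M) ∨ (s(p.x, p.y) ∉ M ∧ s(p.y, p.z) ∈ M)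

def cls1 (M : Finset (Sym2 V)) (p : P3 V) : Prop := kcnt M p = 0
def cls2 (M : Finset (Sym2 V)) (p : P3 V) : Prop := kcnt M p = 1 ∧ ¬ covered M p.y
def cls3 (M : Finset (Sym2 V)) (p : P3 V) : Prop := kcnt M p = 1 ∧ covered M p.y
def cls4 (M : Finset (Sym2 V)) (p : P3 V) : Prop := kcnt M p = 2 ∧ ¬ covered M p.y
def cls5 (M : Finset (Sym2 V)) (p : P3 V) : Prop := kcnt M p = 2 ∧ covered M p.y ∧ exOne M p
def cls6 (M : Finset (Sym2 V)) (p : P3 V) : Prop :=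
  kcnt M p = 2 ∧ covered M p.y ∧ s(p.x, p.y) ∉ M ∧ s(p.y, p.z) ∉ M
def cls7 (M : Finset (Sym2 V)) (p : P3 V) : Prop := kcnt M p = 3 ∧ exOne M p
def cls8 (M : Finset (Sym2 V)) (p : P3 V) : Prop :=
  kcnt M p = 3 ∧ s(p.x, p.y) ∉ M ∧ s(p.y, p.z) ∉ M

/-- The subset of a set of 3-paths satisfying a predicate. -/
noncomputable def psel (P : Finset (P3 V)) (c : P3 V → Prop) : Finset (P3 V) := P.filter c

/-- The set of all edges of the 3-paths in `S`. -/
def Esub (S : Finset (P3 V)) : Finset (Sym2 V) := S.biUnion P3.edges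

/-- The heaviest edge of a 3-path (the edge `xy` in case of a tie). -/
noncomputable def heavy (w : Sym2 V → ℝ) (p : P3 V) : Sym2 V :=
  if w s(p.y, p.z) ≤ w s(p.x, p.y) then s(p.x, p.y) else s(p.y, p.z)

noncomputable def X1 (w : Sym2 V → ℝ) (P : Finset (P3 V)) (M : Finset (Sym2 V)) :
    Finset (Sym2 V) := (psel P (cls1 M)).image (heavy w)
noncomputable def X2 (P : Finset (P3 V)) (M : Finset (Sym2 V)) : Finset (Sym2 V) :=
  (psel P (cls2 M)).image fun p => if covered M p.x then s(p.x, p.y) else s(p.y, p.z)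
noncomputable def X3 (w : Sym2 V → ℝ) (P : Finset (P3 V)) (M : Finset (Sym2 V)) :
    Finset (Sym2 V) := (psel P (cls3 M)).image (heavy w)
noncomputable def X4 (w : Sym2 V → ℝ) (P : Finset (P3 V)) (M : Finset (Sym2 V)) :
    Finset (Sym2 V) := (psel P (cls4 M)).image (heavy w)
noncomputable def X5 (P : Finset (P3 V)) (M : Finset (Sym2 V)) : Finset (Sym2 V) :=
  (psel P (cls5 M)).image fun p => if s(p.x, p.y) ∈ M then s(p.y, p.z) else s(p.x, p.y)
noncomputable def X6 (P : Finset (P3 V)) (M : Finset (Sym2 V)) : Finset (Sym2 V) :=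
  (psel P (cls6 M)).image fun p => if covered M p.x then s(p.y, p.z) else s(p.x, p.y)
noncomputable def X7 (P : Finset (P3 V)) (M : Finset (Sym2 V)) : Finset (Sym2 V) :=
  (psel P (cls7 M)).image fun p => if s(p.x, p.y) ∈ M then s(p.y, p.z) else s(p.x, p.y)
noncomputable def X8 (w : Sym2 V → ℝ) (P : Finset (P3 V)) (M : Finset (Sym2 V)) :
    Finset (Sym2 V) := (psel P (cls8 M)).image (heavy w)

noncomputable def Y1 (w : Sym2 V → ℝ) (P : Finset (P3 V)) (M : Finset (Sym2 V)) :
    Finset (Sym2 V) := Esub (psel P (cls1 M)) \ X1 w P M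
noncomputable def Y2 (P : Finset (P3 V)) (M : Finset (Sym2 V)) : Finset (Sym2 V) :=
  Esub (psel P (cls2 M)) \ X2 P M
noncomputable def Y3 (w : Sym2 V → ℝ) (P : Finset (P3 V)) (M : Finset (Sym2 V)) :
    Finset (Sym2 V) := Esub (psel P (cls3 M)) \ X3 w P M
noncomputable def Y4 (w : Sym2 V → ℝ) (P : Finset (P3 V)) (M : Finset (Sym2 V)) :
    Finset (Sym2 V) := Esub (psel P (cls4 M)) \ X4 w P M
noncomputable def Y5 (P : Finset (P3 V)) (M : Finset (Sym2 V)) : Finset (Sym2 V) :=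
  Esub (psel P (cls5 M)) \ X5 P M
noncomputable def Y6 (P : Finset (P3 V)) (M : Finset (Sym2 V)) : Finset (Sym2 V) :=
  Esub (psel P (cls6 M)) \ X6 P M
noncomputable def Y7 (P : Finset (P3 V)) (M : Finset (Sym2 V)) : Finset (Sym2 V) :=
  Esub (psel P (cls7 M)) \ X7 P M
noncomputable def Y8 (w : Sym2 V → ℝ) (P : Finset (P3 V)) (M : Finset (Sym2 V)) :
    Finset (Sym2 V) := Esub (psel P (cls8 M)) \ X8 w P M

/-- An edge is a middle edge (w.r.t. `M`) if exactly one of its endpoints lies in `V(M)`. -/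
def isMiddle (M : Finset (Sym2 V)) (e : Sym2 V) : Prop :=
  ∃ u v : V, e = s(u, v) ∧ covered M u ∧ ¬ covered M v

/-- Two edges share a vertex. -/
def shares (e f : Sym2 V) : Prop := ∃ v, v ∈ e ∧ v ∈ f

/-- `g` is a middle edge of some 3-path in `S`. -/
def middleIn (M : Finset (Sym2 V)) (S : Finset (P3 V)) (g : Sym2 V) : Prop :=
  (∃ p ∈ S, g ∈ p.edges) ∧ isMiddle M g

/-- The 3-paths of `P` lying in classes 2, 3 or 4. -/
noncomputable def P234 (P : Finset (P3 V)) (M : Finset (Sym2 V)) : Finset (P3 V) :=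
  psel P fun p => cls2 M p ∨ cls3 M p ∨ cls4 M p

/-- `M_1`: edges of `M` sharing a vertex with at least one middle edge of a 3-path of `P*_6`. -/
noncomputable def Mset1 (P : Finset (P3 V)) (M : Finset (Sym2 V)) : Finset (Sym2 V) :=
  M.filter fun f => ∃ g, middleIn M (psel P (cls6 M)) g ∧ shares f g

/-- `M_2`: edges of `M` sharing a vertex with at least one middle edge, all middle edges met
belonging to 3-paths of `P*_2 ∪ P*_3 ∪ P*_4`. -/
noncomputable def Mset2 (P : Finset (P3 V)) (M : Finset (Sym2 V)) : Finset (Sym2 V) :=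
  M.filter fun f =>
    (∃ g, middleIn M P g ∧ shares f g) ∧
    ∀ g, middleIn M P g → shares f g → middleIn M (P234 P M) g

/-- `M_3 = M ∩ E(P*_7)`. -/
noncomputable def Mset3 (P : Finset (P3 V)) (M : Finset (Sym2 V)) : Finset (Sym2 V) :=
  M ∩ Esub (psel P (cls7 M))

/-- `M_4 = M ∩ E(P*_5)`. -/
noncomputable def Mset4 (P : Finset (P3 V)) (M : Finset (Sym2 V)) : Finset (Sym2 V) :=
  M ∩ Esub (psel P (cls5 M))

/-- The middle edges of 3-paths of `P*_6`. -/
noncomputable def mid6 (P : Finset (P3 V)) (M : Finset (Sym2 V)) : Finset (Sym2 V) :=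
  (Esub (psel P (cls6 M))).filter (isMiddle M)

/-- `M'_1`: edges of `M_1` meeting exactly one middle edge of a 3-path of `P*_6` and
no middle edge of a 3-path of `P*_2 ∪ P*_3 ∪ P*_4`. -/
noncomputable def Mset1' (P : Finset (P3 V)) (M : Finset (Sym2 V)) : Finset (Sym2 V) :=
  (Mset1 P M).filter fun f =>
    ((mid6 P M).filter fun g => shares f g).card = 1 ∧
    ∀ g, middleIn M (P234 P M) g → ¬ shares f g

/-- `M''_1`: edges of `M_1` meeting two middle edges of 3-paths of `P*_6`. -/
noncomputable def Mset1'' (P : Finset (P3 V)) (M : Finset (Sym2 V)) : Finset (Sym2 V) :=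
  (Mset1 P M).filter fun f => ((mid6 P M).filter fun g => shares f g).card = 2

/-- `M'''_1`: edges of `M_1` meeting exactly one middle edge of a 3-path of `P*_6` and
at least one middle edge of a 3-path of `P*_2 ∪ P*_3 ∪ P*_4`. -/
noncomputable def Mset1''' (P : Finset (P3 V)) (M : Finset (Sym2 V)) : Finset (Sym2 V) :=
  (Mset1 P M).filter fun f =>
    ((mid6 P M).filter fun g => shares f g).card = 1 ∧
    ∃ g, middleIn M (P234 P M) g ∧ shares f g

/-- Assumption on `P*`: for every 3-path `xyz ∈ P*` with `y ∉ V(M)` and `x, z ∈ V(M)`,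
the vertices `x` and `z` lie in two distinct edges of `M`. -/
def Ass (P : Finset (P3 V)) (M : Finset (Sym2 V)) : Prop :=
  ∀ p ∈ P, ¬ covered M p.y → covered M p.x → covered M p.z →
    ∃ e ∈ M, ∃ f ∈ M, p.x ∈ e ∧ p.z ∈ f ∧ e ≠ f

/-- An admissible edge w.r.t. `M`: either both endpoints are in `V(M)` and lie in two distinct
edges of `M`, or exactly one endpoint is in `V(M)`. -/
def goodEdge (M : Finset (Sym2 V)) (e : Sym2 V) : Prop :=
  (∃ u v : V, e = s(u, v) ∧ covered M u ∧ covered M v ∧ ∀ f ∈ M, ¬(u ∈ f ∧ v ∈ f)) ∨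
  (∃ u v : V, e = s(u, v) ∧ covered M u ∧ ¬ covered M v)



set_option linter.unusedSectionVars false

section Helpers

variable {w : Sym2 V → ℝ} {M : Finset (Sym2 V)} {P : Finset (P3 V)}

lemma mem_verts_iff {p : P3 V} {v : V} : v ∈ p.verts ↔ v = p.x ∨ v = p.y ∨ v = p.z := by
  simp [P3.verts]

lemma mem_edges_iff {p : P3 V} {e : Sym2 V} :
    e ∈ p.edges ↔ e = s(p.x, p.y) ∨ e = s(p.y, p.z) := by
  simp [P3.edges]

lemma vert_of_edge {p : P3 V} {e : Sym2 V} (he : e ∈ p.edges) {v : V} (hv : v ∈ e) :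
    v ∈ p.verts := by
  rcases mem_edges_iff.1 he with rfl | rfl <;> rcases Sym2.mem_iff.1 hv with rfl | rfl <;>
    simp [mem_verts_iff]

lemma heavy_mem_edges (w : Sym2 V → ℝ) (p : P3 V) : heavy w p ∈ p.edges := by
  unfold heavy; split <;> simp [mem_edges_iff]

lemma y_mem_heavy (w : Sym2 V → ℝ) (p : P3 V) : p.y ∈ heavy w p := by
  unfold heavy; split <;> simp

lemma w_heavy (w : Sym2 V → ℝ) (p : P3 V) :
    w (heavy w p) = max (w s(p.x, p.y)) (w s(p.y, p.z)) := by
  unfold heavy; split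
  · exact (max_eq_left (by assumption)).symm
  · exact (max_eq_right (le_of_not_ge (by assumption))).symm

lemma heavy_not_diag (w : Sym2 V → ℝ) (p : P3 V) : ¬ (heavy w p).IsDiag := by
  unfold heavy; split <;> simp [Sym2.mk_isDiag_iff]
  · exact p.hxy
  · exact p.hyz

lemma mem_psel {P : Finset (P3 V)} {c : P3 V → Prop} {p : P3 V} :
    p ∈ psel P c ↔ p ∈ P ∧ c p := Finset.mem_filter

lemma covered_of_mem {e : Sym2 V} (he : e ∈ M) {v : V} (hv : v ∈ e) : covered M v :=
  ⟨e, he, hv⟩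

lemma match_eq (hM : IsMatching M) {e f : Sym2 V} (he : e ∈ M) (hf : f ∈ M) {v : V}
    (hve : v ∈ e) (hvf : v ∈ f) : e = f := by
  by_contra h
  exact hM.2 e he f hf h v hve hvf

lemma matching_subset (hM : IsMatching M) {T : Finset (Sym2 V)} (hT : T ⊆ M) :
    IsMatching T :=
  ⟨fun e he => hM.1 e (hT he), fun e he f hf h v hv => hM.2 e (hT he) f (hT hf) h v hv⟩

lemma packing_path_eq (hP : IsPacking P) {p q : P3 V} (hp : p ∈ P) (hq : q ∈ P) {v : V}
    (hv : v ∈ p.verts) (hv' : v ∈ q.verts) : p = q := by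
  by_contra h
  have := (hP.2.1 p hp q hq h).le_bot (by simp [Finset.mem_inter, hv, hv'] : v ∈ p.verts ⊓ q.verts)
  simp at this

lemma kcnt_eq (M : Finset (Sym2 V)) (p : P3 V) :
    kcnt M p = (if covered M p.x then 1 else 0) + (if covered M p.y then 1 else 0) +
      (if covered M p.z then 1 else 0) := by
  have hxy := p.hxy; have hyz := p.hyz; have hxz := p.hxz
  unfold kcnt P3.verts
  rw [Finset.card_filter]
  rw [show ({p.x, p.y, p.z} : Finset V) = insert p.x (insert p.y {p.z}) from rfl]
  rw [Finset.sum_insert (by simp [hxy, hxz]), Finset.sum_insert (by simp [hyz]),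
    Finset.sum_singleton, add_assoc]

lemma covered_card (hM : IsMatching M) :
    (univ.filter fun v => covered M v).card = 2 * M.card := by
  have : (univ.filter fun v => covered M v) = M.biUnion fun e => univ.filter (· ∈ e) := by
    ext v
    simp only [Finset.mem_filter, Finset.mem_biUnion, Finset.mem_univ, true_and, covered]
    exact ⟨fun h => ((Finset.mem_filter (p := fun v => covered M v)).1 h).2,
      fun h => (Finset.mem_filter (p := fun v => covered M v)).2 ⟨Finset.mem_univ _, h⟩⟩
  rw [this, Finset.card_biUnion, Finset.sum_congr rfl, Finset.sum_const, smul_eq_mul, mul_comm]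
  · intro e he
    induction e using Sym2.ind with | _ a b =>
    have hab : a ≠ b := by
      intro h; exact hM.1 _ he (by simp [Sym2.mk_isDiag_iff, h])
    have : (univ.filter (· ∈ s(a, b))) = {a, b} := by
      ext v; simp [Sym2.mem_iff]
    rw [this, Finset.card_pair hab]
  · intro e he f hf hef
    simp only [Finset.disjoint_left, Finset.mem_filter, Finset.mem_univ, true_and]
    intro v hv hv'
    exact hM.2 e he f hf hef v hv hv'

end Helpers


section Classes

variable {w : Sym2 V → ℝ} {M : Finset (Sym2 V)} {P : Finset (P3 V)}

lemma sym2_exists_eq (e : Sym2 V) : ∃ a b : V, e = s(a, b) := by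
  induction e using Sym2.ind with | _ a b => exact ⟨a, b, rfl⟩

lemma both_edges_not_mem (hM : IsMatching M) (p : P3 V) (h1 : s(p.x, p.y) ∈ M)
    (h2 : s(p.y, p.z) ∈ M) : False := by
  have hne : s(p.x, p.y) ≠ s(p.y, p.z) := by
    intro h
    rcases Sym2.eq_iff.1 h with ⟨h1, h2⟩ | ⟨h1, h2⟩
    · exact p.hxy h1
    · exact p.hxz h1
  exact hM.2 _ h1 _ h2 hne p.y (by simp) (by simp)

lemma class_cases (hM : IsMatching M) (p : P3 V) :
    cls1 M p ∨ cls2 M p ∨ cls3 M p ∨ cls4 M p ∨ cls5 M p ∨ cls6 M p ∨ cls7 M p ∨ cls8 M p := by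
  have hk := kcnt_eq M p
  by_cases hx : covered M p.x <;> by_cases hy : covered M p.y <;> by_cases hz : covered M p.z <;>
    simp [hx, hy, hz] at hk
  · by_cases h1 : s(p.x, p.y) ∈ M <;> by_cases h2 : s(p.y, p.z) ∈ M
    · exact absurd (both_edges_not_mem hM p h1 h2) (by simp)
    · have : cls7 M p := ⟨hk, Or.inl ⟨h1, h2⟩⟩; tauto
    · have : cls7 M p := ⟨hk, Or.inr ⟨h1, h2⟩⟩; tauto
    · have : cls8 M p := ⟨hk, h1, h2⟩; tauto
  · by_cases h1 : s(p.x, p.y) ∈ M <;> by_cases h2 : s(p.y, p.z) ∈ M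
    · exact absurd (both_edges_not_mem hM p h1 h2) (by simp)
    · have : cls5 M p := ⟨hk, hy, Or.inl ⟨h1, h2⟩⟩; tauto
    · have : cls5 M p := ⟨hk, hy, Or.inr ⟨h1, h2⟩⟩; tauto
    · have : cls6 M p := ⟨hk, hy, h1, h2⟩; tauto
  · have : cls4 M p := ⟨hk, hy⟩; tauto
  · have : cls2 M p := ⟨hk, hy⟩; tauto
  · by_cases h1 : s(p.x, p.y) ∈ M <;> by_cases h2 : s(p.y, p.z) ∈ M
    · exact absurd (both_edges_not_mem hM p h1 h2) (by simp)
    · have : cls5 M p := ⟨hk, hy, Or.inl ⟨h1, h2⟩⟩; tauto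
    · have : cls5 M p := ⟨hk, hy, Or.inr ⟨h1, h2⟩⟩; tauto
    · have : cls6 M p := ⟨hk, hy, h1, h2⟩; tauto
  · have : cls3 M p := ⟨hk, hy⟩; tauto
  · have : cls2 M p := ⟨hk, hy⟩; tauto
  · have : cls1 M p := hk; tauto

lemma cls1_struct {p : P3 V} (h : cls1 M p) :
    ¬ covered M p.x ∧ ¬ covered M p.y ∧ ¬ covered M p.z := by
  have hk := kcnt_eq M p
  rw [cls1] at h
  by_cases hx : covered M p.x <;> by_cases hy : covered M p.y <;> by_cases hz : covered M p.z <;>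
    simp [hx, hy, hz] at hk ⊢ <;> omega

lemma cls2_struct {p : P3 V} (h : cls2 M p) :
    ¬ covered M p.y ∧ ((covered M p.x ∧ ¬ covered M p.z) ∨ (¬ covered M p.x ∧ covered M p.z)) := by
  have hk := kcnt_eq M p
  obtain ⟨h, hy⟩ := h
  by_cases hx : covered M p.x <;> by_cases hz : covered M p.z <;>
    simp [hx, hy, hz] at hk ⊢ <;> omega

lemma cls3_struct {p : P3 V} (h : cls3 M p) :
    covered M p.y ∧ ¬ covered M p.x ∧ ¬ covered M p.z := by
  have hk := kcnt_eq M p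
  obtain ⟨h, hy⟩ := h
  by_cases hx : covered M p.x <;> by_cases hz : covered M p.z <;>
    simp [hx, hy, hz] at hk ⊢ <;> omega

lemma cls4_struct {p : P3 V} (h : cls4 M p) :
    ¬ covered M p.y ∧ covered M p.x ∧ covered M p.z := by
  have hk := kcnt_eq M p
  obtain ⟨h, hy⟩ := h
  by_cases hx : covered M p.x <;> by_cases hz : covered M p.z <;>
    simp [hx, hy, hz] at hk ⊢ <;> omega

lemma kcnt2y_struct {p : P3 V} (h : kcnt M p = 2) (hy : covered M p.y) :
    (covered M p.x ∧ ¬ covered M p.z) ∨ (¬ covered M p.x ∧ covered M p.z) := by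
  have hk := kcnt_eq M p
  by_cases hx : covered M p.x <;> by_cases hz : covered M p.z <;>
    simp [hx, hy, hz] at hk ⊢ <;> omega

lemma kcnt3_struct {p : P3 V} (h : kcnt M p = 3) :
    covered M p.x ∧ covered M p.y ∧ covered M p.z := by
  have hk := kcnt_eq M p
  by_cases hx : covered M p.x <;> by_cases hy : covered M p.y <;> by_cases hz : covered M p.z <;>
    simp [hx, hy, hz] at hk ⊢ <;> omega

lemma isMiddle_both_false {a b : V} (h : isMiddle M s(a, b)) (ha : covered M a)
    (hb : covered M b) : False := by
  obtain ⟨u, v, he, hu, hv⟩ := h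
  rcases Sym2.eq_iff.1 he with ⟨h1, h2⟩ | ⟨h1, h2⟩
  · exact hv (h2 ▸ hb)
  · exact hv (h1 ▸ ha)

lemma isMiddle_ex_uncov {g : Sym2 V} (h : isMiddle M g) : ∃ v ∈ g, ¬ covered M v := by
  obtain ⟨u, v, he, hu, hv⟩ := h
  exact ⟨v, by rw [he]; simp, hv⟩

/-- an edge of a `P234` path with a covered endpoint is a middle edge. -/
lemma mid_edge {p : P3 V} (hcls : cls2 M p ∨ cls3 M p ∨ cls4 M p) {e : Sym2 V}
    (he : e ∈ p.edges) {v : V} (hv : v ∈ e) (hcov : covered M v) : isMiddle M e := by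
  rcases mem_edges_iff.1 he with rfl | rfl
  · rcases hcls with h | h | h
    · obtain ⟨hy, hxz⟩ := cls2_struct h
      rcases Sym2.mem_iff.1 hv with rfl | rfl
      · exact ⟨p.x, p.y, rfl, hcov, hy⟩
      · exact absurd hcov hy
    · obtain ⟨hy, hx, hz⟩ := cls3_struct h
      exact ⟨p.y, p.x, Sym2.eq_swap, hy, hx⟩
    · obtain ⟨hy, hx, hz⟩ := cls4_struct h
      exact ⟨p.x, p.y, rfl, hx, hy⟩
  · rcases hcls with h | h | h
    · obtain ⟨hy, hxz⟩ := cls2_struct h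
      rcases Sym2.mem_iff.1 hv with rfl | rfl
      · exact absurd hcov hy
      · exact ⟨p.z, p.y, Sym2.eq_swap, hcov, hy⟩
    · obtain ⟨hy, hx, hz⟩ := cls3_struct h
      exact ⟨p.y, p.z, rfl, hy, hz⟩
    · obtain ⟨hy, hx, hz⟩ := cls4_struct h
      exact ⟨p.z, p.y, Sym2.eq_swap, hz, hy⟩

/-- a `cls6` path has a unique middle edge. -/
lemma cls6_unique {q : P3 V} (h6 : cls6 M q) {g1 g2 : Sym2 V} (hg1 : g1 ∈ q.edges)
    (hm1 : isMiddle M g1) (hg2 : g2 ∈ q.edges) (hm2 : isMiddle M g2) : g1 = g2 := by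
  obtain ⟨hk, hy, _, _⟩ := h6
  rcases kcnt2y_struct hk hy with ⟨hx, hz⟩ | ⟨hx, hz⟩
  · have e1 : g1 = s(q.y, q.z) := by
      rcases mem_edges_iff.1 hg1 with rfl | rfl
      · exact absurd (isMiddle_both_false hm1 hx hy) not_false
      · rfl
    have e2 : g2 = s(q.y, q.z) := by
      rcases mem_edges_iff.1 hg2 with rfl | rfl
      · exact absurd (isMiddle_both_false hm2 hx hy) not_false
      · rfl
    rw [e1, e2]
  · have e1 : g1 = s(q.x, q.y) := by
      rcases mem_edges_iff.1 hg1 with rfl | rfl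
      · rfl
      · exact absurd (isMiddle_both_false hm1 hy hz) not_false
    have e2 : g2 = s(q.x, q.y) := by
      rcases mem_edges_iff.1 hg2 with rfl | rfl
      · rfl
      · exact absurd (isMiddle_both_false hm2 hy hz) not_false
    rw [e1, e2]

/-- an edge of `M` sharing a vertex with a middle edge of a `cls5` path has both
endpoints in that path. -/
lemma cls5_share (hM : IsMatching M) {q : P3 V} (h5 : cls5 M q) {g : Sym2 V}
    (hg : g ∈ q.edges) (hmid : isMiddle M g) {f : Sym2 V} (hf : f ∈ M)
    (hsh : shares f g) : ∀ v ∈ f, v ∈ q.verts := by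
  obtain ⟨hk, hy, hex⟩ := h5
  obtain ⟨v', hvf, hvg⟩ := hsh
  rcases hex with ⟨h1, h2⟩ | ⟨h1, h2⟩
  · have hx : covered M q.x := covered_of_mem h1 (by simp)
    have hz : ¬ covered M q.z := by
      rcases kcnt2y_struct hk hy with ⟨_, hz⟩ | ⟨hx', _⟩
      · exact hz
      · exact absurd hx hx'
    have hgeq : g = s(q.y, q.z) := by
      rcases mem_edges_iff.1 hg with rfl | rfl
      · exact absurd (isMiddle_both_false hmid hx hy) not_false
      · rfl
    subst hgeq
    rcases Sym2.mem_iff.1 hvg with rfl | rfl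
    · have : f = s(q.x, q.y) := match_eq hM hf h1 hvf (by simp)
      subst this
      intro v hv
      rcases Sym2.mem_iff.1 hv with rfl | rfl <;> simp [mem_verts_iff]
    · exact absurd (covered_of_mem hf hvf) hz
  · have hz : covered M q.z := covered_of_mem h2 (by simp)
    have hx : ¬ covered M q.x := by
      rcases kcnt2y_struct hk hy with ⟨_, hz'⟩ | ⟨hx', _⟩
      · exact absurd hz hz'
      · exact hx'
    have hgeq : g = s(q.x, q.y) := by
      rcases mem_edges_iff.1 hg with rfl | rfl
      · rfl
      · exact absurd (isMiddle_both_false hmid hy hz) not_false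
    subst hgeq
    rcases Sym2.mem_iff.1 hvg with rfl | rfl
    · exact absurd (covered_of_mem hf hvf) hx
    · have : f = s(q.y, q.z) := match_eq hM hf h2 hvf (by simp)
      subst this
      intro v hv
      rcases Sym2.mem_iff.1 hv with rfl | rfl <;> simp [mem_verts_iff]

end Classes


section Key

variable {M : Finset (Sym2 V)} {P : Finset (P3 V)}

lemma cls6_not_234 {p : P3 V} (h6 : cls6 M p) (h : cls2 M p ∨ cls3 M p ∨ cls4 M p) : False := by
  obtain ⟨hk, hy, _, _⟩ := h6
  rcases h with h | h | h
  · exact absurd hk (by rw [h.1]; omega)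
  · exact absurd hk (by rw [h.1]; omega)
  · exact h.2 hy

lemma cls5_not_234 {p : P3 V} (h5 : cls5 M p) (h : cls2 M p ∨ cls3 M p ∨ cls4 M p) : False := by
  obtain ⟨hk, hy, _⟩ := h5
  rcases h with h | h | h
  · exact absurd hk (by rw [h.1]; omega)
  · exact absurd hk (by rw [h.1]; omega)
  · exact h.2 hy

lemma mem_mid6_iff {g : Sym2 V} :
    g ∈ mid6 P M ↔ (∃ q, (q ∈ P ∧ cls6 M q) ∧ g ∈ q.edges) ∧ isMiddle M g := by
  simp [mid6, Esub, psel, Finset.mem_filter, Finset.mem_biUnion]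

/-- at most one middle edge of a cls6 path shares a vertex with f,
provided f also shares a vertex with an edge of a P234-path. -/
lemma mid6_card (hP : IsPacking P) (hM : IsMatching M) {f : Sym2 V} (hf : f ∈ M)
    {p : P3 V} (hp : p ∈ P) (hcls : cls2 M p ∨ cls3 M p ∨ cls4 M p) {g : Sym2 V}
    (hg : g ∈ p.edges) {u : V} (huf : u ∈ f) (hug : u ∈ g) :
    ((mid6 P M).filter fun g' => shares f g').card ≤ 1 := by
  obtain ⟨a, b, rfl⟩ := sym2_exists_eq f
  have hab : a ≠ b := by
    intro h; exact hM.1 _ hf (by simp [Sym2.mk_isDiag_iff, h])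
  rw [Finset.card_le_one]
  intro g1 hg1 g2 hg2
  rw [Finset.mem_filter] at hg1 hg2
  obtain ⟨hm1, v1, hv1f, hv1g⟩ := hg1
  obtain ⟨hm2, v2, hv2f, hv2g⟩ := hg2
  obtain ⟨⟨q1, ⟨hq1, hq1c⟩, hg1e⟩, hmid1⟩ := mem_mid6_iff.1 hm1
  obtain ⟨⟨q2, ⟨hq2, hq2c⟩, hg2e⟩, hmid2⟩ := mem_mid6_iff.1 hm2
  have hune : ∀ (q' : P3 V) (g' : Sym2 V), q' ∈ P → cls6 M q' → g' ∈ q'.edges →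
      ∀ v ∈ g', v ≠ u := by
    intro q' g' hq' hq'c hg'e v hv hvu
    subst hvu
    have h1 : v ∈ q'.verts := vert_of_edge hg'e hv
    have h2 : v ∈ p.verts := vert_of_edge hg hug
    exact cls6_not_234 (packing_path_eq hP hq' hp h1 h2 ▸ hq'c) hcls
  have hv12 : v1 = v2 := by
    have h1 := hune q1 g1 hq1 hq1c hg1e v1 hv1g
    have h2 := hune q2 g2 hq2 hq2c hg2e v2 hv2g
    rcases Sym2.mem_iff.1 huf with rfl | rfl <;>
      rcases Sym2.mem_iff.1 hv1f with rfl | rfl <;>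
      rcases Sym2.mem_iff.1 hv2f with rfl | rfl <;> first | rfl | (exfalso; tauto)
  have hq12 : q1 = q2 :=
    packing_path_eq hP hq1 hq2 (vert_of_edge hg1e hv1g) (hv12 ▸ vert_of_edge hg2e hv2g)
  subst hq12
  exact cls6_unique hq1c hg1e hmid1 hg2e hmid2

/-- The key lemma. -/
lemma key (hP : IsPacking P) (hM : IsMatching M) {f : Sym2 V} (hf : f ∈ M)
    {p : P3 V} (hp : p ∈ P) (hcls : cls2 M p ∨ cls3 M p ∨ cls4 M p) {g : Sym2 V}
    (hg : g ∈ p.edges) (hmid : isMiddle M g) {u : V} (huf : u ∈ f) (hug : u ∈ g) :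
    f ∈ Mset1''' P M ∪ Mset2 P M := by
  have hmidP234 : middleIn M (P234 P M) g :=
    ⟨⟨p, by simp [P234, psel, Finset.mem_filter, hp, hcls], hg⟩, hmid⟩
  have hc1 : ((mid6 P M).filter fun g' => shares f g').card ≤ 1 :=
    mid6_card hP hM hf hp hcls hg huf hug
  rcases Nat.le_one_iff_eq_zero_or_eq_one.1 hc1 with hc | hc
  · -- no mid6 edge shares f : f in Mset2
    rw [Finset.card_eq_zero] at hc
    refine Finset.mem_union_right _ ?_
    rw [Mset2, Finset.mem_filter]
    refine ⟨hf, ⟨g, ⟨⟨p, hp, hg⟩, hmid⟩, u, huf, hug⟩, ?_⟩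
    intro g' hmidg' hsh'
    obtain ⟨⟨q, hq, hg'q⟩, hmid'⟩ := hmidg'
    rcases class_cases hM q with h | h | h | h | h | h | h | h
    · obtain ⟨hx, hy, hz⟩ := cls1_struct h
      obtain ⟨u', v', heq, hu', hv'⟩ := hmid'
      have : u' ∈ q.verts := vert_of_edge hg'q (by rw [heq]; simp)
      rcases mem_verts_iff.1 this with rfl | rfl | rfl <;> tauto
    · exact ⟨⟨q, by simp [P234, psel, Finset.mem_filter, hq, h], hg'q⟩, hmid'⟩
    · exact ⟨⟨q, by simp [P234, psel, Finset.mem_filter, hq, h], hg'q⟩, hmid'⟩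
    · exact ⟨⟨q, by simp [P234, psel, Finset.mem_filter, hq, h], hg'q⟩, hmid'⟩
    · exfalso
      have huq : u ∈ q.verts := cls5_share hM h hg'q hmid' hf hsh' u huf
      have hup : u ∈ p.verts := vert_of_edge hg hug
      exact cls5_not_234 (packing_path_eq hP hq hp huq hup ▸ h) hcls
    · exfalso
      have : g' ∈ (mid6 P M).filter fun g'' => shares f g'' := by
        rw [Finset.mem_filter]
        exact ⟨mem_mid6_iff.2 ⟨⟨q, ⟨hq, h⟩, hg'q⟩, hmid'⟩, hsh'⟩
      rw [hc] at this
      exact absurd this (Finset.notMem_empty _)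
    · obtain ⟨hcx, hcy, hcz⟩ := kcnt3_struct h.1
      obtain ⟨v', hv'g, hv'⟩ := isMiddle_ex_uncov hmid'
      have : v' ∈ q.verts := vert_of_edge hg'q hv'g
      rcases mem_verts_iff.1 this with rfl | rfl | rfl <;> tauto
    · obtain ⟨hcx, hcy, hcz⟩ := kcnt3_struct h.1
      obtain ⟨v', hv'g, hv'⟩ := isMiddle_ex_uncov hmid'
      have : v' ∈ q.verts := vert_of_edge hg'q hv'g
      rcases mem_verts_iff.1 this with rfl | rfl | rfl <;> tauto
  · -- exactly one
    refine Finset.mem_union_left _ ?_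
    rw [Mset1''', Finset.mem_filter]
    obtain ⟨g'', hg''⟩ := Finset.card_eq_one.1 hc
    have hg''mem : g'' ∈ (mid6 P M).filter fun g' => shares f g' := by rw [hg'']; simp
    rw [Finset.mem_filter] at hg''mem
    obtain ⟨hm'', hsh''⟩ := hg''mem
    obtain ⟨⟨q'', hq''2, hg''e⟩, hmid''⟩ := mem_mid6_iff.1 hm''
    refine ⟨?_, hc, g, hmidP234, u, huf, hug⟩
    rw [Mset1, Finset.mem_filter]
    exact ⟨hf, g'', ⟨⟨q'', by simp [psel, Finset.mem_filter, hq''2.1, hq''2.2], hg''e⟩, hmid''⟩, hsh''⟩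

end Key


section Counting

variable {M : Finset (Sym2 V)} {P : Finset (P3 V)}

lemma kcnt_le_three (M : Finset (Sym2 V)) (p : P3 V) : kcnt M p ≤ 3 := by
  have hk := kcnt_eq M p
  by_cases hx : covered M p.x <;> by_cases hy : covered M p.y <;> by_cases hz : covered M p.z <;>
    simp [hx, hy, hz] at hk <;> omega

lemma sum_kcnt (hP : IsPacking P) (hM : IsMatching M) :
    ∑ p ∈ P, kcnt M p = 2 * M.card := by
  have huniv : (univ : Finset V) = P.biUnion P3.verts := by
    ext v
    simp only [Finset.mem_univ, true_iff, Finset.mem_biUnion]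
    exact hP.2.2 v
  rw [← covered_card hM, huniv, Finset.filter_biUnion, Finset.card_biUnion]
  · rfl
  · intro p hp q hq hpq
    exact Finset.disjoint_filter_filter (hP.2.1 p hp q hq hpq)

lemma count_small (hP : IsPacking P) (hM : IsMatching M) :
    3 * (psel P (cls1 M)).card + 2 * (psel P (cls2 M)).card + 2 * (psel P (cls3 M)).card
      + 2 * M.card ≤ 3 * P.card := by
  have hsum : ∑ p ∈ P, (3 - kcnt M p) + 2 * M.card = 3 * P.card := by
    rw [← sum_kcnt hP hM, ← Finset.sum_add_distrib]
    rw [Finset.sum_congr rfl fun p _ => Nat.sub_add_cancel (kcnt_le_three M p)]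
    simp [Finset.sum_const, mul_comm]
  have hd12 : Disjoint (psel P (cls1 M)) (psel P (cls2 M)) := by
    rw [Finset.disjoint_left]
    intro p h1 h2
    rw [psel, Finset.mem_filter] at h1 h2
    have ha := h1.2; have hb := h2.2.1; rw [cls1] at ha; omega
  have hd13 : Disjoint (psel P (cls1 M)) (psel P (cls3 M)) := by
    rw [Finset.disjoint_left]
    intro p h1 h2
    rw [psel, Finset.mem_filter] at h1 h2
    have ha := h1.2; have hb := h2.2.1; rw [cls1] at ha; omega
  have hd23 : Disjoint (psel P (cls2 M)) (psel P (cls3 M)) := by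
    rw [Finset.disjoint_left]
    intro p h1 h2
    rw [psel, Finset.mem_filter] at h1 h2
    exact h1.2.2 h2.2.2
  have hsub : psel P (cls1 M) ∪ psel P (cls2 M) ∪ psel P (cls3 M) ⊆ P := by
    intro p hp
    rcases Finset.mem_union.1 hp with hp | hp
    · rcases Finset.mem_union.1 hp with hp | hp <;> exact (Finset.mem_filter.1 hp).1
    · exact (Finset.mem_filter.1 hp).1
  have e1 : ∑ p ∈ psel P (cls1 M), (3 - kcnt M p) = 3 * (psel P (cls1 M)).card := by
    rw [Finset.sum_congr rfl fun p hp => by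
      rw [(Finset.mem_filter.1 hp).2]]
    simp [mul_comm]
  have e2 : ∑ p ∈ psel P (cls2 M), (3 - kcnt M p) = 2 * (psel P (cls2 M)).card := by
    rw [Finset.sum_congr rfl fun p hp => by
      rw [(Finset.mem_filter.1 hp).2.1]]
    simp [mul_comm]
  have e3 : ∑ p ∈ psel P (cls3 M), (3 - kcnt M p) = 2 * (psel P (cls3 M)).card := by
    rw [Finset.sum_congr rfl fun p hp => by
      rw [(Finset.mem_filter.1 hp).2.1]]
    simp [mul_comm]
  have hbound : 3 * (psel P (cls1 M)).card + 2 * (psel P (cls2 M)).card +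
      2 * (psel P (cls3 M)).card ≤ ∑ p ∈ P, (3 - kcnt M p) := by
    calc 3 * (psel P (cls1 M)).card + 2 * (psel P (cls2 M)).card + 2 * (psel P (cls3 M)).card
        = ∑ p ∈ psel P (cls1 M) ∪ psel P (cls2 M) ∪ psel P (cls3 M), (3 - kcnt M p) := by
          rw [Finset.sum_union (Finset.disjoint_union_left.2 ⟨hd13, hd23⟩),
            Finset.sum_union hd12, e1, e2, e3]
      _ ≤ ∑ p ∈ P, (3 - kcnt M p) := Finset.sum_le_sum_of_subset hsub
  omega

end Counting

section Extend

lemma extend (w : Sym2 V → ℝ) (hw : ∀ e, 0 ≤ w e) :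
    ∀ (d : ℕ) (F : Finset (Sym2 V)), IsMatching F → 2 * F.card + 2 * d = Fintype.card V →
    ∃ F', IsMatching F' ∧ F'.card = F.card + d ∧ ew w F ≤ ew w F' := by
  intro d
  induction d with
  | zero => exact fun F hF _ => ⟨F, hF, by simp, le_refl _⟩
  | succ d ih =>
    intro F hF hcard
    have hU : (univ.filter fun v => ¬ covered F v).card = 2 * d + 2 := by
      have h1 := covered_card hF
      have h2 := Finset.card_filter_add_card_filter_not (s := (univ : Finset V))
        (fun v => covered F v)
      rw [Finset.card_univ] at h2
      omega
    obtain ⟨a, ha, b, hb, hab⟩ := Finset.one_lt_card.1 (by omega : 1 <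
      (univ.filter fun v => ¬ covered F v).card)
    rw [Finset.mem_filter] at ha hb
    have hnotmem : s(a, b) ∉ F := fun h => ha.2 ⟨_, h, by simp⟩
    have hm : IsMatching (insert s(a, b) F) := by
      constructor
      · intro e he
        rcases Finset.mem_insert.1 he with rfl | he
        · simp [Sym2.mk_isDiag_iff, hab]
        · exact hF.1 e he
      · intro e he f hf hef v hve hvf
        rcases Finset.mem_insert.1 he with he1 | he1
        · rcases Finset.mem_insert.1 hf with hf1 | hf1
          · exact hef (he1.trans hf1.symm)
          · rw [he1] at hve
            rcases Sym2.mem_iff.1 hve with rfl | rfl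
            · exact ha.2 ⟨f, hf1, hvf⟩
            · exact hb.2 ⟨f, hf1, hvf⟩
        · rcases Finset.mem_insert.1 hf with hf1 | hf1
          · rw [hf1] at hvf
            rcases Sym2.mem_iff.1 hvf with rfl | rfl
            · exact ha.2 ⟨e, he1, hve⟩
            · exact hb.2 ⟨e, he1, hve⟩
          · exact hF.2 e he1 f hf1 hef v hve hvf
    have hcard' : (insert s(a, b) F).card = F.card + 1 := Finset.card_insert_of_notMem hnotmem
    obtain ⟨F', h1, h2, h3⟩ := ih (insert s(a, b) F) hm (by rw [hcard']; omega)
    refine ⟨F', h1, by rw [h2, hcard']; omega, le_trans ?_ h3⟩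
    unfold ew
    rw [Finset.sum_insert hnotmem]
    linarith [hw s(a, b)]

end Extend

theorem statement_10 (n : ℕ) (hn : Fintype.card V = n) (h3 : 3 ∣ n) (h2 : 2 ∣ n)
    (w : Sym2 V → ℝ) (hw : ∀ e : Sym2 V, 0 ≤ w e)
    (M : Finset (Sym2 V)) (hM : IsMaxMatchingOfSize w (n / 3) M)
    (N : Finset (Sym2 V)) (hN : IsMaxMatchingOfSize w (n / 2) N)
    (Pstar : Finset (P3 V)) (hP : IsMaxPacking w Pstar) (hAss : Ass Pstar M) :
    ew w M - ew w (Mset1''' Pstar M) - ew w (Mset2 Pstar M) + ew w (X1 w Pstar M) +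
      maxSum w (psel Pstar (cls2 M)) + ew w (X3 w Pstar M) + ew w (X4 w Pstar M) ≤
      ew w N := by
  obtain ⟨hMm, hMcard, hMmax⟩ := hM
  obtain ⟨hPack, hPmax⟩ := hP
  obtain ⟨hNm, hNcard, hNmax⟩ := hN
  set A := Mset1''' Pstar M with hA
  set B := Mset2 Pstar M with hB
  have hAM : A ⊆ M := by
    intro f hf
    have h1 : f ∈ Mset1 Pstar M := Finset.mem_of_mem_filter f hf
    exact Finset.mem_of_mem_filter f h1
  have hBM : B ⊆ M := fun f hf => Finset.mem_of_mem_filter f hf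
  have hABd : Disjoint A B := by
    rw [Finset.disjoint_left]
    intro f hfA hfB
    rw [hA, Mset1''', Finset.mem_filter] at hfA
    obtain ⟨hf1, hcard1, g0, hg0, hsh0⟩ := hfA
    have hpos : 0 < ((mid6 Pstar M).filter fun g => shares f g).card := by rw [hcard1]; omega
    obtain ⟨g'', hg''⟩ := Finset.card_pos.1 hpos
    rw [Finset.mem_filter] at hg''
    obtain ⟨hm'', hsh''⟩ := hg''
    obtain ⟨⟨q, ⟨hqP, hq6⟩, hge⟩, hmid''⟩ := mem_mid6_iff.1 hm''
    rw [hB, Mset2, Finset.mem_filter] at hfB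
    have h234 := hfB.2.2 g'' ⟨⟨q, hqP, hge⟩, hmid''⟩ hsh''
    obtain ⟨⟨r, hr, hg''r⟩, _⟩ := h234
    rw [P234, mem_psel] at hr
    obtain ⟨aa, bb, rfl⟩ := sym2_exists_eq g''
    have h1 : aa ∈ q.verts := vert_of_edge hge (by simp)
    have h2 : aa ∈ r.verts := vert_of_edge hg''r (by simp)
    exact cls6_not_234 ((packing_path_eq hPack hqP hr.1 h1 h2) ▸ hq6) hr.2
  set S := psel Pstar (fun p => cls1 M p ∨ cls2 M p ∨ cls3 M p ∨ cls4 M p) with hS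
  have hSP : ∀ p ∈ S, p ∈ Pstar := fun p hp => (mem_psel.1 hp).1
  have hScls : ∀ p ∈ S, cls1 M p ∨ cls2 M p ∨ cls3 M p ∨ cls4 M p :=
    fun p hp => (mem_psel.1 hp).2
  have hinjP : ∀ p ∈ Pstar, ∀ q ∈ Pstar, heavy w p = heavy w q → p = q := by
    intro p hp q hq he
    exact packing_path_eq hPack hp hq
      (mem_verts_iff.2 (Or.inr (Or.inl rfl)))
      (vert_of_edge (heavy_mem_edges w q) (by rw [← he]; exact y_mem_heavy w p))
  have hinj : ∀ p ∈ S, ∀ q ∈ S, heavy w p = heavy w q → p = q :=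
    fun p hp q hq => hinjP p (hSP p hp) q (hSP q hq)
  have huncov : ∀ p ∈ S, ∃ v ∈ heavy w p, ¬ covered M v := by
    intro p hp
    rcases hScls p hp with h | h | h | h
    · exact ⟨p.y, y_mem_heavy w p, (cls1_struct h).2.1⟩
    · exact ⟨p.y, y_mem_heavy w p, (cls2_struct h).1⟩
    · obtain ⟨hy, hx, hz⟩ := cls3_struct h
      rcases mem_edges_iff.1 (heavy_mem_edges w p) with he | he
      · exact ⟨p.x, by rw [he]; simp, hx⟩
      · exact ⟨p.z, by rw [he]; simp, hz⟩
    · exact ⟨p.y, y_mem_heavy w p, (cls4_struct h).1⟩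
  set added := S.image (heavy w) with hadded
  have haddedM : ∀ e ∈ added, e ∉ M := by
    intro e he heM
    obtain ⟨p, hp, rfl⟩ := Finset.mem_image.1 he
    obtain ⟨v, hv, hvc⟩ := huncov p hp
    exact hvc ⟨_, heM, hv⟩
  have hconf : ∀ f ∈ M \ (A ∪ B), ∀ p ∈ S, ∀ v, v ∈ f → v ∈ heavy w p → False := by
    intro f hf p hp v hvf hvh
    rw [Finset.mem_sdiff] at hf
    have hcov : covered M v := ⟨f, hf.1, hvf⟩
    rcases hScls p hp with h | h234
    · obtain ⟨hx, hy, hz⟩ := cls1_struct h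
      have hv := vert_of_edge (heavy_mem_edges w p) hvh
      rcases mem_verts_iff.1 hv with rfl | rfl | rfl <;> tauto
    · exact hf.2 (key hPack hMm hf.1 (hSP p hp) h234 (heavy_mem_edges w p)
        (mid_edge h234 (heavy_mem_edges w p) hvh hcov) hvf hvh)
  set F := (M \ (A ∪ B)) ∪ added with hF
  have hdisjKA : Disjoint (M \ (A ∪ B)) added := by
    rw [Finset.disjoint_right]
    intro e he heK
    exact haddedM e he (Finset.mem_sdiff.1 heK).1
  have hFm : IsMatching F := by
    constructor
    · intro e he
      rcases Finset.mem_union.1 he with he | he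
      · exact hMm.1 e (Finset.mem_sdiff.1 he).1
      · obtain ⟨p, hp, rfl⟩ := Finset.mem_image.1 he
        exact heavy_not_diag w p
    · intro e he f hf hef v hve hvf
      rcases Finset.mem_union.1 he with he | he <;> rcases Finset.mem_union.1 hf with hf | hf
      · exact hMm.2 e (Finset.mem_sdiff.1 he).1 f (Finset.mem_sdiff.1 hf).1 hef v hve hvf
      · obtain ⟨p, hp, rfl⟩ := Finset.mem_image.1 hf
        exact hconf e he p hp v hve hvf
      · obtain ⟨p, hp, rfl⟩ := Finset.mem_image.1 he
        exact hconf f hf p hp v hvf hve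
      · obtain ⟨p, hp, rfl⟩ := Finset.mem_image.1 he
        obtain ⟨q, hq, heq2⟩ := Finset.mem_image.1 hf
        have h1 : v ∈ p.verts := vert_of_edge (heavy_mem_edges w p) hve
        have h2 : v ∈ q.verts := vert_of_edge (heavy_mem_edges w q) (by rw [heq2]; exact hvf)
        exact hef (by rw [← heq2, packing_path_eq hPack (hSP p hp) (hSP q hq) h1 h2])
  -- disjointness of the four class filters
  have hdd : ∀ (c c' : P3 V → Prop), (∀ p : P3 V, c p → c' p → False) →
      Disjoint (psel Pstar c) (psel Pstar c') := by
    intro c c' h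
    rw [Finset.disjoint_left]
    intro p h1 h2
    exact h p (mem_psel.1 h1).2 (mem_psel.1 h2).2
  have hd12 : Disjoint (psel Pstar (cls1 M)) (psel Pstar (cls2 M)) :=
    hdd _ _ fun p h1 h2 => by rw [cls1] at h1; have := h2.1; omega
  have hd13 : Disjoint (psel Pstar (cls1 M)) (psel Pstar (cls3 M)) :=
    hdd _ _ fun p h1 h2 => by rw [cls1] at h1; have := h2.1; omega
  have hd14 : Disjoint (psel Pstar (cls1 M)) (psel Pstar (cls4 M)) :=
    hdd _ _ fun p h1 h2 => by rw [cls1] at h1; have := h2.1; omega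
  have hd23 : Disjoint (psel Pstar (cls2 M)) (psel Pstar (cls3 M)) :=
    hdd _ _ fun p h1 h2 => h1.2 h2.2
  have hd24 : Disjoint (psel Pstar (cls2 M)) (psel Pstar (cls4 M)) :=
    hdd _ _ fun p h1 h2 => by have := h1.1; have := h2.1; omega
  have hd34 : Disjoint (psel Pstar (cls3 M)) (psel Pstar (cls4 M)) :=
    hdd _ _ fun p h1 h2 => by have := h1.1; have := h2.1; omega
  have hSeq : S = psel Pstar (cls1 M) ∪ psel Pstar (cls2 M) ∪ psel Pstar (cls3 M) ∪
      psel Pstar (cls4 M) := by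
    ext p
    simp only [hS, mem_psel, Finset.mem_union]
    tauto
  have hdU1 : Disjoint (psel Pstar (cls1 M) ∪ psel Pstar (cls2 M)) (psel Pstar (cls3 M)) :=
    Finset.disjoint_union_left.2 ⟨hd13, hd23⟩
  have hdU2 : Disjoint (psel Pstar (cls1 M) ∪ psel Pstar (cls2 M) ∪ psel Pstar (cls3 M))
      (psel Pstar (cls4 M)) :=
    Finset.disjoint_union_left.2 ⟨Finset.disjoint_union_left.2 ⟨hd14, hd24⟩, hd34⟩
  -- weight of F
  have h1w : ew w F = ew w (M \ (A ∪ B)) + ew w added := Finset.sum_union hdisjKA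
  have h2w : ew w (M \ (A ∪ B)) + (ew w A + ew w B) = ew w M := by
    rw [ew, ew, ew, ← Finset.sum_union hABd, Finset.sum_sdiff (Finset.union_subset hAM hBM)]
    rfl
  have h3w : ew w added = ∑ p ∈ S, w (heavy w p) := Finset.sum_image hinj
  have h4w : ∑ p ∈ S, w (heavy w p) = (∑ p ∈ psel Pstar (cls1 M), w (heavy w p)) +
      (∑ p ∈ psel Pstar (cls2 M), w (heavy w p)) + (∑ p ∈ psel Pstar (cls3 M), w (heavy w p)) +
      (∑ p ∈ psel Pstar (cls4 M), w (heavy w p)) := by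
    rw [hSeq, Finset.sum_union hdU2, Finset.sum_union hdU1, Finset.sum_union hd12]
  have hsub1 : ∀ (c : P3 V → Prop), psel Pstar c ⊆ Pstar := fun c p hp => (mem_psel.1 hp).1
  have hX1 : ew w (X1 w Pstar M) = ∑ p ∈ psel Pstar (cls1 M), w (heavy w p) :=
    Finset.sum_image fun p hp q hq => hinjP p (hsub1 _ hp) q (hsub1 _ hq)
  have hX3 : ew w (X3 w Pstar M) = ∑ p ∈ psel Pstar (cls3 M), w (heavy w p) :=
    Finset.sum_image fun p hp q hq => hinjP p (hsub1 _ hp) q (hsub1 _ hq)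
  have hX4 : ew w (X4 w Pstar M) = ∑ p ∈ psel Pstar (cls4 M), w (heavy w p) :=
    Finset.sum_image fun p hp q hq => hinjP p (hsub1 _ hp) q (hsub1 _ hq)
  have hX2 : ∑ p ∈ psel Pstar (cls2 M), w (heavy w p) = maxSum w (psel Pstar (cls2 M)) :=
    Finset.sum_congr rfl fun p _ => w_heavy w p
  -- cardinality of F
  have hc1 : F.card = (M \ (A ∪ B)).card + added.card := Finset.card_union_of_disjoint hdisjKA
  have hc2 : (M \ (A ∪ B)).card = M.card - (A ∪ B).card :=
    Finset.card_sdiff_of_subset (Finset.union_subset hAM hBM)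
  have hc3 : added.card = S.card :=
    Finset.card_image_of_injOn fun p hp q hq h =>
      hinj p (Finset.mem_coe.1 hp) q (Finset.mem_coe.1 hq) h
  have hc4 : S.card ≤ (psel Pstar (cls1 M)).card + (psel Pstar (cls2 M)).card +
      (psel Pstar (cls3 M)).card + (psel Pstar (cls4 M)).card := by
    rw [hSeq]
    refine le_trans (Finset.card_union_le _ _) ?_
    refine add_le_add_left (le_trans (Finset.card_union_le _ _) ?_) _
    exact add_le_add_left (Finset.card_union_le _ _) _
  have hc5 : (A ∪ B).card ≤ M.card := Finset.card_le_card (Finset.union_subset hAM hBM)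
  -- the cls4 bound
  have hkey4 : ∀ p ∈ psel Pstar (cls4 M), covered (A ∪ B) p.x ∧ covered (A ∪ B) p.z := by
    intro p hp
    obtain ⟨hpP, hp4⟩ := mem_psel.1 hp
    obtain ⟨hy, hx, hz⟩ := cls4_struct hp4
    obtain ⟨e, heM, f, hfM, hxe, hzf, hef⟩ := hAss p hpP hy hx hz
    have h234 : cls2 M p ∨ cls3 M p ∨ cls4 M p := Or.inr (Or.inr hp4)
    have he1 : s(p.x, p.y) ∈ p.edges := mem_edges_iff.2 (Or.inl rfl)
    have he2 : s(p.y, p.z) ∈ p.edges := mem_edges_iff.2 (Or.inr rfl)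
    have he' : e ∈ A ∪ B :=
      key hPack hMm heM hpP h234 he1 (mid_edge h234 he1 (by simp) hx) hxe (by simp)
    have hf' : f ∈ A ∪ B :=
      key hPack hMm hfM hpP h234 he2
        (mid_edge h234 he2 (show p.z ∈ s(p.y, p.z) by simp) hz) hzf (by simp)
    exact ⟨⟨e, he', hxe⟩, ⟨f, hf', hzf⟩⟩
  have hABm : IsMatching (A ∪ B) := matching_subset hMm (Finset.union_subset hAM hBM)
  have hvpq : ∀ p ∈ Pstar, ∀ q ∈ Pstar, ∀ u, u ∈ p.verts → u ∈ q.verts → p = q :=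
    fun p hp q hq u h1 h2 => packing_path_eq hPack hp hq h1 h2
  have hcnt : ((psel Pstar (cls4 M)) ×ˢ ({false, true} : Finset Bool)).card ≤
      (univ.filter fun v => covered (A ∪ B) v).card := by
    apply Finset.card_le_card_of_injOn (fun pb => if pb.2 then pb.1.x else pb.1.z)
    · intro pb hpb
      rw [Finset.mem_coe, Finset.mem_product] at hpb
      by_cases hb : pb.2 <;> simp only [hb, if_true, if_false, Bool.false_eq_true,
        Finset.mem_coe, Finset.mem_filter, Finset.mem_univ, true_and]
      · exact (hkey4 _ hpb.1).1
      · exact (hkey4 _ hpb.1).2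
    · rintro ⟨p, b⟩ hpb ⟨q, c⟩ hqb heq
      rw [Finset.mem_coe, Finset.mem_product] at hpb hqb
      have hpP : p ∈ Pstar := (mem_psel.1 hpb.1).1
      have hqP : q ∈ Pstar := (mem_psel.1 hqb.1).1
      have hxv : ∀ r : P3 V, r.x ∈ r.verts := fun r => mem_verts_iff.2 (Or.inl rfl)
      have hzv : ∀ r : P3 V, r.z ∈ r.verts := fun r => mem_verts_iff.2 (Or.inr (Or.inr rfl))
      cases b <;> cases c <;> simp only [Bool.false_eq_true, if_true, if_false] at heq
      · have hpq : p = q := hvpq p hpP q hqP p.z (hzv p) (by rw [heq]; exact hzv q)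
        rw [hpq]
      · exfalso
        have hpq : p = q := hvpq p hpP q hqP p.z (hzv p) (by rw [heq]; exact hxv q)
        rw [hpq] at heq
        exact q.hxz heq.symm
      · exfalso
        have hpq : p = q := hvpq p hpP q hqP p.x (hxv p) (by rw [heq]; exact hzv q)
        rw [hpq] at heq
        exact q.hxz heq
      · have hpq : p = q := hvpq p hpP q hqP p.x (hxv p) (by rw [heq]; exact hxv q)
        rw [hpq]
  have hc6 : (psel Pstar (cls4 M)).card ≤ (A ∪ B).card := by
    have hcc := covered_card hABm
    rw [Finset.card_product] at hcnt
    have hbool : ({false, true} : Finset Bool).card = 2 := rfl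
    rw [hbool, hcc] at hcnt
    omega
  have hc7 := count_small hPack hMm
  have hc8 : Pstar.card = n / 3 := by rw [hPack.1, hn]
  have hc9 : M.card = n / 3 := hMcard
  have hcardF : F.card ≤ n / 2 := by omega
  -- extend F to a matching of size n / 2
  obtain ⟨d, hd⟩ : ∃ d, F.card + d = n / 2 := ⟨n / 2 - F.card, by omega⟩
  obtain ⟨F', hF'm, hF'card, hF'w⟩ := extend w hw d F hFm (by rw [hn]; omega)
  have hF'card2 : F'.card = n / 2 := by rw [hF'card]; omega
  have hle := hNmax F' hF'm hF'card2
  linarith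


end MW3PP
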